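/- Under the FWAL iteration hypotheses — β₀ > 0, β_t = β₀√(t+1), η_t = 2/(t+1), W₁ ∈ Δ^p, y₁ ∈ ℝ^d, G_t = C + 𝒜ᵀy_t + β_t 𝒜ᵀ(𝒜W_t − v), H_t ∈ Δ^p a minimizer of W ↦ Tr(G_t W) over Δ^p, W_{t+1} = (1 − η_t) W_t + η_t H_t, g_t = 𝒜W_{t+1} − v, y_{t+1} = y_t + γ_t g_t with γ_t ≥ 0 satisfying γ_t‖g_t‖² ≤ β_t η_t² p² ‖𝒜‖², and W⋆ ∈ Δ^p with 𝒜W⋆ = v — the augmented Lagrangian value satisfies, for every t ≥ 1, L_{β_t}(W_{t+1}; y_{t+1}) − Tr(C W⋆) ≤ 6 β₀ ‖𝒜‖² p² / √(t+1). -/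

import Mathlib

open scoped BigOperators

noncomputable section

/-- A binary (0/1-valued) vector. -/
def binaryVec {ι : Type*} (x : ι → ℝ) : Prop := ∀ i, x i = 0 ∨ x i = 1

/-- `Δ^p`: the convex hull of the rank-one binary matrices `x xᵀ`, `x ∈ {0,1}^p`. -/
def CPdelta (ι : Type*) [Fintype ι] : Set (Matrix ι ι ℝ) :=
  convexHull ℝ {M | ∃ x : ι → ℝ, binaryVec x ∧ M = Matrix.vecMulVec x x}

/-- Frobenius inner product of matrices. -/
def frobInner {ι : Type*} [Fintype ι] (A B : Matrix ι ι ℝ) : ℝ := ∑ i, ∑ j, A i j * B i j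

/-- Frobenius norm of a matrix. -/
def frobNorm {ι : Type*} [Fintype ι] (A : Matrix ι ι ℝ) : ℝ :=
  Real.sqrt (∑ i, ∑ j, (A i j) ^ 2)

/-- Operator norm `‖𝒜‖ = sup {‖𝒜X‖ : ‖X‖_F ≤ 1}` of a linear map from matrices
(with the Frobenius norm) to `ℝ^d` (with the Euclidean norm). -/
def opNorm {p d : ℕ} (A : Matrix (Fin p) (Fin p) ℝ →ₗ[ℝ] EuclideanSpace ℝ (Fin d)) : ℝ :=
  sSup {r : ℝ | ∃ X : Matrix (Fin p) (Fin p) ℝ, frobNorm X ≤ 1 ∧ r = ‖A X‖}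

/-- The augmented Lagrangian `L_β(W; y) = Tr(C W) + yᵀ(𝒜W - v) + (β/2)‖𝒜W - v‖²`. -/
def Lag {p d : ℕ} (C : Matrix (Fin p) (Fin p) ℝ)
    (A : Matrix (Fin p) (Fin p) ℝ →ₗ[ℝ] EuclideanSpace ℝ (Fin d))
    (v : EuclideanSpace ℝ (Fin d)) (β : ℝ)
    (W : Matrix (Fin p) (Fin p) ℝ) (y : EuclideanSpace ℝ (Fin d)) : ℝ :=
  Matrix.trace (C * W) + (∑ i, y i * (A W - v) i) + β / 2 * ‖A W - v‖ ^ 2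

lemma CPdelta_convex (ι : Type*) [Fintype ι] : Convex ℝ (CPdelta ι) := convex_convexHull _ _

-- helper lemmas (to be inserted above the theorem)
lemma CPdelta_isSymm {ι : Type*} [Fintype ι] {M : Matrix ι ι ℝ} (h : M ∈ CPdelta ι) :
    M.IsSymm := by
  have hsub : CPdelta ι ⊆ {M : Matrix ι ι ℝ | M.IsSymm} := by
    apply convexHull_min
    · rintro M ⟨x, _, rfl⟩
      ext i j
      simp [Matrix.vecMulVec_apply, Matrix.transpose_apply, mul_comm]
    · intro X hX Y hY a b _ _ _
      simp only [Set.mem_setOf_eq, Matrix.IsSymm] at *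
      rw [Matrix.transpose_add, Matrix.transpose_smul, Matrix.transpose_smul, hX, hY]
  exact hsub h

lemma CPdelta_entry {ι : Type*} [Fintype ι] {M : Matrix ι ι ℝ} (h : M ∈ CPdelta ι) (i j : ι) :
    M i j ∈ Set.Icc (0:ℝ) 1 := by
  have hsub : CPdelta ι ⊆ {M : Matrix ι ι ℝ | ∀ i j, M i j ∈ Set.Icc (0:ℝ) 1} := by
    apply convexHull_min
    · rintro M ⟨x, hx, rfl⟩ i j
      rcases hx i with h1 | h1 <;> rcases hx j with h2 | h2 <;>
        simp [Matrix.vecMulVec_apply, h1, h2]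
    · intro X hX Y hY a b ha hb hab i j
      have := (convex_Icc (0:ℝ) 1) (hX i j) (hY i j) ha hb hab
      simpa [Matrix.add_apply, Matrix.smul_apply] using this
  exact hsub h i j

lemma frobNorm_sub_le {p : ℕ} {X Y : Matrix (Fin p) (Fin p) ℝ}
    (hX : X ∈ CPdelta (Fin p)) (hY : Y ∈ CPdelta (Fin p)) : frobNorm (X - Y) ≤ p := by
  have hsum : (∑ i, ∑ j, ((X - Y) i j) ^ 2) ≤ ∑ _i : Fin p, ∑ _j : Fin p, (1:ℝ) := by
    refine Finset.sum_le_sum fun i _ => Finset.sum_le_sum fun j _ => ?_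
    have h1 := CPdelta_entry hX i j
    have h2 := CPdelta_entry hY i j
    simp only [Set.mem_Icc] at h1 h2
    have : (X - Y) i j = X i j - Y i j := by simp [Matrix.sub_apply]
    rw [this]; nlinarith [h1.1, h1.2, h2.1, h2.2]
  have h2 : (∑ _i : Fin p, ∑ _j : Fin p, (1:ℝ)) = (p:ℝ)^2 := by
    simp [Finset.sum_const]; ring
  calc frobNorm (X - Y) ≤ Real.sqrt ((p:ℝ)^2) := by
        apply Real.sqrt_le_sqrt; rw [← h2]; exact hsum
    _ = p := by rw [Real.sqrt_sq (by positivity)]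

lemma frobNorm_nonneg' {p : ℕ} (X : Matrix (Fin p) (Fin p) ℝ) : 0 ≤ frobNorm X :=
  Real.sqrt_nonneg _

lemma frobNorm_smul {p : ℕ} (c : ℝ) (X : Matrix (Fin p) (Fin p) ℝ) :
    frobNorm (c • X) = |c| * frobNorm X := by
  unfold frobNorm
  rw [← Real.sqrt_sq_eq_abs, ← Real.sqrt_mul (sq_nonneg c), Finset.mul_sum]
  congr 1
  refine Finset.sum_congr rfl fun i _ => ?_
  rw [Finset.mul_sum]
  refine Finset.sum_congr rfl fun j _ => ?_
  simp [Matrix.smul_apply]; ring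

lemma frobNorm_eq_zero {p : ℕ} {X : Matrix (Fin p) (Fin p) ℝ} (h : frobNorm X = 0) : X = 0 := by
  unfold frobNorm at h
  have hs : (∑ i, ∑ j, (X i j) ^ 2) = 0 := by
    have hnn : (0:ℝ) ≤ ∑ i, ∑ j, (X i j) ^ 2 := by positivity
    nlinarith [Real.sq_sqrt hnn, h]
  ext i j
  have h1 : ∀ i ∈ Finset.univ, (0:ℝ) ≤ ∑ j, (X i j)^2 := fun i _ => by positivity
  have h2 := (Finset.sum_eq_zero_iff_of_nonneg h1).mp hs i (Finset.mem_univ i)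
  have h3 : ∀ j ∈ Finset.univ, (0:ℝ) ≤ (X i j)^2 := fun j _ => sq_nonneg _
  have h4 := (Finset.sum_eq_zero_iff_of_nonneg h3).mp h2 j (Finset.mem_univ j)
  simpa using pow_eq_zero_iff (n := 2) (by norm_num) |>.mp h4

lemma opNorm_bddAbove {p d : ℕ} (A : Matrix (Fin p) (Fin p) ℝ →ₗ[ℝ] EuclideanSpace ℝ (Fin d)) :
    BddAbove {r : ℝ | ∃ X : Matrix (Fin p) (Fin p) ℝ, frobNorm X ≤ 1 ∧ r = ‖A X‖} := by
  use ∑ i : Fin p, ∑ j : Fin p, ‖A (Matrix.single i j 1)‖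
  rintro r ⟨X, hX, rfl⟩
  have hentry : ∀ i j, |X i j| ≤ 1 := by
    intro i j
    have h1 : (X i j)^2 ≤ ∑ i', ∑ j', (X i' j')^2 := by
      calc (X i j)^2 ≤ ∑ j', (X i j')^2 :=
            Finset.single_le_sum (f := fun j' => (X i j')^2)
              (fun j' _ => sq_nonneg _) (Finset.mem_univ j)
        _ ≤ ∑ i', ∑ j', (X i' j')^2 :=
            Finset.single_le_sum (f := fun i' => ∑ j', (X i' j')^2)
              (fun i' _ => by positivity) (Finset.mem_univ i)
    have h2 : Real.sqrt ((X i j)^2) ≤ frobNorm X := Real.sqrt_le_sqrt h1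
    rw [Real.sqrt_sq_eq_abs] at h2
    linarith
  have hrepr : X = ∑ i : Fin p, ∑ j : Fin p, (X i j) • Matrix.single i j 1 := by
    conv_lhs => rw [Matrix.matrix_eq_sum_single X]
    refine Finset.sum_congr rfl fun i _ => Finset.sum_congr rfl fun j _ => ?_
    rw [Matrix.smul_single, smul_eq_mul, mul_one]
  have hAX : A X = ∑ i : Fin p, ∑ j : Fin p, (X i j) • A (Matrix.single i j 1) := by
    conv_lhs => rw [hrepr]
    rw [map_sum]
    refine Finset.sum_congr rfl fun i _ => ?_
    rw [map_sum]
    exact Finset.sum_congr rfl fun j _ => map_smul A _ _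
  calc ‖A X‖ = ‖∑ i : Fin p, ∑ j : Fin p, (X i j) • A (Matrix.single i j 1)‖ := by
        rw [hAX]
    _ ≤ ∑ i : Fin p, ∑ j : Fin p, ‖(X i j) • A (Matrix.single i j 1)‖ := by
        refine (norm_sum_le _ _).trans (Finset.sum_le_sum fun i _ => norm_sum_le _ _)
    _ ≤ ∑ i : Fin p, ∑ j : Fin p, ‖A (Matrix.single i j 1)‖ := by
        refine Finset.sum_le_sum fun i _ => Finset.sum_le_sum fun j _ => ?_
        rw [norm_smul]
        have := hentry i j
        have hn : 0 ≤ ‖A (Matrix.single i j 1)‖ := norm_nonneg _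
        calc ‖X i j‖ * ‖A (Matrix.single i j 1)‖
            ≤ 1 * ‖A (Matrix.single i j 1)‖ := by
              apply mul_le_mul_of_nonneg_right _ hn
              rwa [Real.norm_eq_abs]
          _ = _ := one_mul _

lemma opNorm_nonneg {p d : ℕ} (A : Matrix (Fin p) (Fin p) ℝ →ₗ[ℝ] EuclideanSpace ℝ (Fin d)) :
    0 ≤ opNorm A := by
  apply le_csSup (opNorm_bddAbove A)
  exact ⟨0, by simp [frobNorm], by simp⟩

lemma norm_A_le {p d : ℕ} (A : Matrix (Fin p) (Fin p) ℝ →ₗ[ℝ] EuclideanSpace ℝ (Fin d))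
    (Z : Matrix (Fin p) (Fin p) ℝ) : ‖A Z‖ ≤ opNorm A * frobNorm Z := by
  rcases eq_or_lt_of_le (frobNorm_nonneg' Z) with h | h
  · have hZ : Z = 0 := frobNorm_eq_zero h.symm
    simp [hZ, frobNorm]
  · have hmem : ‖A ((frobNorm Z)⁻¹ • Z)‖ ≤ opNorm A := by
      apply le_csSup (opNorm_bddAbove A)
      refine ⟨(frobNorm Z)⁻¹ • Z, ?_, rfl⟩
      rw [frobNorm_smul, abs_of_nonneg (by positivity), inv_mul_cancel₀ (ne_of_gt h)]
    rw [map_smul, norm_smul, Real.norm_eq_abs, abs_of_nonneg (by positivity)] at hmem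
    calc ‖A Z‖ = frobNorm Z * ((frobNorm Z)⁻¹ * ‖A Z‖) := by
          field_simp
      _ ≤ frobNorm Z * opNorm A := mul_le_mul_of_nonneg_left hmem (le_of_lt h)
      _ = opNorm A * frobNorm Z := mul_comm _ _

lemma trace_mul_symm {p : ℕ} (M : Matrix (Fin p) (Fin p) ℝ) {D : Matrix (Fin p) (Fin p) ℝ}
    (hD : D.IsSymm) : Matrix.trace (M * D) = frobInner M D := by
  simp only [Matrix.trace, Matrix.diag, Matrix.mul_apply, frobInner]
  exact Finset.sum_congr rfl fun i _ => Finset.sum_congr rfl fun j _ => by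
    rw [hD.apply i j]

lemma euclid_inner {d : ℕ} (a b : EuclideanSpace ℝ (Fin d)) :
    (inner ℝ a b : ℝ) = ∑ i, a i * b i := by
  simp [PiLp.inner_apply, RCLike.inner_apply, conj_trivial]
  exact Finset.sum_congr rfl fun i _ => mul_comm _ _

lemma pair_eq {p d : ℕ} (A : Matrix (Fin p) (Fin p) ℝ →ₗ[ℝ] EuclideanSpace ℝ (Fin d))
    (Aadj : EuclideanSpace ℝ (Fin d) →ₗ[ℝ] Matrix (Fin p) (Fin p) ℝ)
    (hadj : ∀ (X : Matrix (Fin p) (Fin p) ℝ) (z : EuclideanSpace ℝ (Fin d)),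
      (∑ i, A X i * z i) = frobInner (Aadj z) X)
    {D : Matrix (Fin p) (Fin p) ℝ} (hD : D.IsSymm) (z : EuclideanSpace ℝ (Fin d)) :
    ∑ i, z i * A D i = Matrix.trace (Aadj z * D) := by
  rw [trace_mul_symm _ hD, ← hadj D z]
  exact Finset.sum_congr rfl fun i _ => mul_comm _ _

lemma lag_expand {p d : ℕ} (C : Matrix (Fin p) (Fin p) ℝ)
    (A : Matrix (Fin p) (Fin p) ℝ →ₗ[ℝ] EuclideanSpace ℝ (Fin d))
    (Aadj : EuclideanSpace ℝ (Fin d) →ₗ[ℝ] Matrix (Fin p) (Fin p) ℝ)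
    (v : EuclideanSpace ℝ (Fin d))
    (hadj : ∀ (X : Matrix (Fin p) (Fin p) ℝ) (z : EuclideanSpace ℝ (Fin d)),
      (∑ i, A X i * z i) = frobInner (Aadj z) X)
    (β η : ℝ) {Wm Hm : Matrix (Fin p) (Fin p) ℝ} (hWs : Wm.IsSymm) (hHs : Hm.IsSymm)
    (yv : EuclideanSpace ℝ (Fin d)) :
    Lag C A v β ((1-η)•Wm + η•Hm) yv
      = Lag C A v β Wm yv
        + η * Matrix.trace ((C + Aadj yv + β • Aadj (A Wm - v)) * (Hm - Wm))
        + η^2 * (β/2) * ‖A (Hm - Wm)‖^2 := by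
  set D : Matrix (Fin p) (Fin p) ℝ := Hm - Wm with hDdef
  have hDs : D.IsSymm := by
    unfold Matrix.IsSymm at *
    rw [hDdef, Matrix.transpose_sub, hHs, hWs]
  have hcomb : (1-η)•Wm + η•Hm = Wm + η • D := by
    ext i j
    simp only [Matrix.add_apply, Matrix.smul_apply, Matrix.sub_apply, hDdef, smul_eq_mul]
    ring
  set a : EuclideanSpace ℝ (Fin d) := A Wm - v with ha
  set b : EuclideanSpace ℝ (Fin d) := A D with hb
  have hsub : A (Wm + η • D) - v = a + η • b := by
    rw [map_add, map_smul, ha, hb]; abel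
  have hT1 : Matrix.trace (C * (Wm + η • D))
      = Matrix.trace (C * Wm) + η * Matrix.trace (C * D) := by
    rw [Matrix.mul_add, Matrix.mul_smul, Matrix.trace_add, Matrix.trace_smul, smul_eq_mul]
  have hS : (∑ i, yv i * (A (Wm + η • D) - v) i)
      = (∑ i, yv i * a i) + η * (∑ i, yv i * b i) := by
    rw [hsub]
    calc ∑ i, yv i * (a + η • b) i
        = ∑ i, (yv i * a i + η * (yv i * b i)) := by
          refine Finset.sum_congr rfl fun i _ => ?_
          have : (a + η • b) i = a i + η * b i := by
            simp [PiLp.add_apply, PiLp.smul_apply]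
          rw [this]; ring
      _ = (∑ i, yv i * a i) + η * (∑ i, yv i * b i) := by
          rw [Finset.sum_add_distrib, Finset.mul_sum]
  have hN : ‖A (Wm + η • D) - v‖^2
      = ‖a‖^2 + 2 * η * (inner ℝ a b : ℝ) + η^2 * ‖b‖^2 := by
    rw [hsub, norm_add_sq_real, real_inner_smul_right, norm_smul, mul_pow,
      Real.norm_eq_abs, sq_abs]
    ring
  have hG : Matrix.trace ((C + Aadj yv + β • Aadj a) * D)
      = Matrix.trace (C * D) + (∑ i, yv i * b i) + β * (inner ℝ a b : ℝ) := by
    rw [Matrix.add_mul, Matrix.add_mul, Matrix.smul_mul, Matrix.trace_add, Matrix.trace_add,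
      Matrix.trace_smul, smul_eq_mul]
    rw [← pair_eq A Aadj hadj hDs yv, ← hb]
    congr 1
    rw [← pair_eq A Aadj hadj hDs a, ← hb, euclid_inner]
  rw [hcomb]
  unfold Lag
  rw [hT1, hS, hN, hG, ← ha]
  ring

lemma step_numeric (K : ℝ) (hK : 0 ≤ K) {z : ℝ} (hz : 1 ≤ z) :
    (1 - 2/(z+1)) * (K / Real.sqrt z) + K / ((z+1) * Real.sqrt (z+1))
      ≤ K / Real.sqrt (z+1) := by
  set a := Real.sqrt z with hadef
  set b := Real.sqrt (z+1) with hbdef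
  have ha2 : a^2 = z := Real.sq_sqrt (by linarith)
  have hb2 : b^2 = z+1 := Real.sq_sqrt (by linarith)
  have ha1 : 1 ≤ a := by
    have := Real.sqrt_le_sqrt hz
    rwa [Real.sqrt_one] at this
  have hb1 : 1 ≤ b := by
    have := Real.sqrt_le_sqrt (show (1:ℝ) ≤ z + 1 by linarith)
    rwa [Real.sqrt_one] at this
  have ha0 : 0 < a := by linarith
  have hb0 : 0 < b := by linarith
  have hz1 : (0:ℝ) < z + 1 := by linarith
  have key : (z-1)*b ≤ z*a := by
    have e1 : (z-1)*b = Real.sqrt ((z-1)^2*(z+1)) := by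
      rw [Real.sqrt_mul (sq_nonneg _), Real.sqrt_sq (by linarith)]
    have e2 : z*a = Real.sqrt (z^2*z) := by
      rw [Real.sqrt_mul (sq_nonneg _), Real.sqrt_sq (by linarith)]
    rw [e1, e2]
    exact Real.sqrt_le_sqrt (by nlinarith)
  have expand : (1 - 2/(z+1)) * (K/a) = K*(z-1)/((z+1)*a) := by
    field_simp; ring
  rw [expand, div_add_div _ _ (by positivity) (by positivity),
    div_le_div_iff₀ (by positivity) hb0]
  have hkey' := mul_le_mul_of_nonneg_left key hK
  nlinarith [hkey', mul_pos hz1 (mul_pos ha0 hb0), mul_nonneg (mul_nonneg hK ha0.le) hb0.le,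
    mul_le_mul_of_nonneg_left hkey' hz1.le]

set_option maxHeartbeats 1000000 in
/-- Convergence of the augmented Lagrangian value along FWAL.
For every `t ≥ 1`, `L_{β_t}(W_{t+1}; y_{t+1}) - Tr(C W⋆) ≤ 6 β₀ ‖𝒜‖² p² / √(t+1)`. -/
theorem fwal_augmented_lagrangian_convergence
    {p d : ℕ} (hp : 0 < p)
    (C : Matrix (Fin p) (Fin p) ℝ) (hC : C.IsSymm)
    (A : Matrix (Fin p) (Fin p) ℝ →ₗ[ℝ] EuclideanSpace ℝ (Fin d))
    (Aadj : EuclideanSpace ℝ (Fin d) →ₗ[ℝ] Matrix (Fin p) (Fin p) ℝ)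
    (hadj : ∀ (X : Matrix (Fin p) (Fin p) ℝ) (z : EuclideanSpace ℝ (Fin d)),
      (∑ i, A X i * z i) = frobInner (Aadj z) X)
    (v : EuclideanSpace ℝ (Fin d))
    (β₀ : ℝ) (hβ₀ : 0 < β₀)
    (W : ℕ → Matrix (Fin p) (Fin p) ℝ)
    (y : ℕ → EuclideanSpace ℝ (Fin d))
    (H : ℕ → Matrix (Fin p) (Fin p) ℝ)
    (γ : ℕ → ℝ)
    (hW1 : W 1 ∈ CPdelta (Fin p))
    -- `H t` is a minimizer over `Δ^p` of `Z ↦ Tr (G_t Z)`, where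
    -- `G_t = C + 𝒜ᵀ y_t + β_t 𝒜ᵀ (𝒜 W_t - v)` and `β_t = β₀ √(t+1)`
    (hHmem : ∀ t, 1 ≤ t → H t ∈ CPdelta (Fin p))
    (hHmin : ∀ t, 1 ≤ t → ∀ Z ∈ CPdelta (Fin p),
      Matrix.trace
        ((C + Aadj (y t) + (β₀ * Real.sqrt ((t : ℝ) + 1)) • Aadj (A (W t) - v)) * H t) ≤
      Matrix.trace
        ((C + Aadj (y t) + (β₀ * Real.sqrt ((t : ℝ) + 1)) • Aadj (A (W t) - v)) * Z))
    -- primal update with step-size `η_t = 2/(t+1)`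
    (hWupd : ∀ t, 1 ≤ t →
      W (t + 1) = (1 - 2 / ((t : ℝ) + 1)) • W t + (2 / ((t : ℝ) + 1)) • H t)
    -- dual step-size condition `γ_t ≥ 0`, `γ_t ‖g_t‖² ≤ β_t η_t² p² ‖𝒜‖²`
    (hγ0 : ∀ t, 1 ≤ t → 0 ≤ γ t)
    (hγ : ∀ t, 1 ≤ t →
      γ t * ‖A (W (t + 1)) - v‖ ^ 2 ≤
        (β₀ * Real.sqrt ((t : ℝ) + 1)) * (2 / ((t : ℝ) + 1)) ^ 2 * (p : ℝ) ^ 2 * opNorm A ^ 2)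
    -- dual update `y_{t+1} = y_t + γ_t g_t` with `g_t = 𝒜 W_{t+1} - v`
    (hyupd : ∀ t, 1 ≤ t → y (t + 1) = y t + γ t • (A (W (t + 1)) - v))
    (Wstar : Matrix (Fin p) (Fin p) ℝ)
    (hWstar : Wstar ∈ CPdelta (Fin p)) (hfeas : A Wstar = v)
    :
    ∀ t : ℕ, 1 ≤ t →
      Lag C A v (β₀ * Real.sqrt ((t : ℝ) + 1)) (W (t + 1)) (y (t + 1)) -
          Matrix.trace (C * Wstar) ≤
        6 * β₀ * opNorm A ^ 2 * (p : ℝ) ^ 2 / Real.sqrt ((t : ℝ) + 1) := by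
  
  set c : ℝ := opNorm A ^ 2 * (p:ℝ)^2 with hc
  have hc0 : (0:ℝ) ≤ c := by positivity
  set fstar : ℝ := Matrix.trace (C * Wstar) with hfstar
  -- membership of W t in Δ^p for t ≥ 1
  have hWmem : ∀ t, 1 ≤ t → W t ∈ CPdelta (Fin p) := by
    intro t ht
    induction t with
    | zero => omega
    | succ n ih =>
      rcases Nat.lt_or_ge n 1 with h | h
      · have : n + 1 = 1 := by omega
        rw [this]; exact hW1
      · have hWn := ih h
        have hHn := hHmem n h
        rw [hWupd n h]
        have hn1 : (1:ℝ) ≤ (n:ℝ) := by exact_mod_cast h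
        have hη0 : (0:ℝ) ≤ 2 / ((n:ℝ)+1) := by positivity
        have hη1 : 2 / ((n:ℝ)+1) ≤ 1 := by
          rw [div_le_one (by linarith)]; linarith
        exact (convex_convexHull ℝ _) hWn hHn (by linarith) hη0 (by ring)
  -- the one-step inequality
  have hstep : ∀ t : ℕ, 1 ≤ t →
      Lag C A v (β₀ * Real.sqrt ((t:ℝ)+1)) (W (t+1)) (y (t+1)) - fstar
        ≤ (1 - 2/((t:ℝ)+1)) * (Lag C A v (β₀ * Real.sqrt (t:ℝ)) (W t) (y t) - fstar)
          + 6*β₀*c/(((t:ℝ)+1) * Real.sqrt ((t:ℝ)+1)) := by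
    intro t ht
    have hx1 : (1:ℝ) ≤ (t:ℝ) := by exact_mod_cast ht
    set x : ℝ := (t:ℝ) with hxdef
    set st : ℝ := Real.sqrt (x+1) with hstdef
    set sp : ℝ := Real.sqrt x with hspdef
    have hst2 : st^2 = x+1 := Real.sq_sqrt (by linarith)
    have hsp2 : sp^2 = x := Real.sq_sqrt (by linarith)
    have hst1 : 1 ≤ st := by
      have := Real.sqrt_le_sqrt (show (1:ℝ) ≤ x + 1 by linarith)
      rwa [Real.sqrt_one] at this
    have hsp1 : 1 ≤ sp := by
      have := Real.sqrt_le_sqrt hx1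
      rwa [Real.sqrt_one] at this
    have hst0 : 0 < st := by linarith
    have hspst : sp ≤ st := Real.sqrt_le_sqrt (by linarith)
    set η : ℝ := 2/(x+1) with hηdef
    have hη0 : 0 ≤ η := by positivity
    have hη1 : η ≤ 1 := by
      rw [hηdef, div_le_one (by linarith)]; linarith
    set βt : ℝ := β₀ * st with hβtdef
    set βp : ℝ := β₀ * sp with hβpdef
    have hβt0 : 0 < βt := mul_pos hβ₀ hst0
    have hβtβp : 0 ≤ βt - βp := by
      have := mul_le_mul_of_nonneg_left hspst hβ₀.le
      simp only [hβtdef, hβpdef]; linarith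
    have hsymW : (W t).IsSymm := CPdelta_isSymm (hWmem t ht)
    have hsymH : (H t).IsSymm := CPdelta_isSymm (hHmem t ht)
    have hsymS : Wstar.IsSymm := CPdelta_isSymm hWstar
    set G : Matrix (Fin p) (Fin p) ℝ := C + Aadj (y t) + βt • Aadj (A (W t) - v) with hGdef
    set q : ℝ := ‖A (W t) - v‖^2 with hqdef
    have hq0 : 0 ≤ q := sq_nonneg _
    set Lt : ℝ := Lag C A v βt (W t) (y t) with hLtdef
    set L1 : ℝ := Lag C A v βp (W t) (y t) with hL1def
    -- (1) expansion along the FW step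
    have h1 : Lag C A v βt (W (t+1)) (y t)
        = Lt + η * Matrix.trace (G * (H t - W t)) + η^2 * (βt/2) * ‖A (H t - W t)‖^2 := by
      rw [hWupd t ht]
      exact lag_expand C A Aadj v hadj βt η hsymW hsymH (y t)
    -- (2) linear minimization
    have h2 : Matrix.trace (G * (H t - W t)) ≤ Matrix.trace (G * (Wstar - W t)) := by
      have := hHmin t ht Wstar hWstar
      rw [Matrix.mul_sub, Matrix.mul_sub, Matrix.trace_sub, Matrix.trace_sub]
      exact sub_le_sub_right this _
    -- (3) value at the feasible point
    have h3 : Lag C A v βt Wstar (y t) = fstar := by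
      unfold Lag
      rw [hfeas, sub_self]
      simp [hfstar]
    -- (4) convexity identity (expansion with η = 1)
    have h4 : Lag C A v βt Wstar (y t)
        = Lt + Matrix.trace (G * (Wstar - W t)) + (βt/2) * ‖A (Wstar - W t)‖^2 := by
      have hε : ((1:ℝ)-1) • (W t) + (1:ℝ) • Wstar = Wstar := by simp
      have := lag_expand C A Aadj v hadj βt 1 hsymW hsymS (y t)
      rw [hε] at this
      rw [this]; ring
    -- (5) norm identification
    have h5 : ‖A (Wstar - W t)‖^2 = q := by
      rw [hqdef]
      congr 1
      rw [map_sub, hfeas, ← norm_neg]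
      congr 1
      abel
    have h6 : Matrix.trace (G * (Wstar - W t)) = fstar - Lt - (βt/2) * q := by
      rw [h5] at h4
      rw [h3] at h4
      linarith
    -- (7) curvature bound
    have h7 : ‖A (H t - W t)‖^2 ≤ c := by
      have hb := norm_A_le A (H t - W t)
      have hf := frobNorm_sub_le (hHmem t ht) (hWmem t ht)
      have hle : ‖A (H t - W t)‖ ≤ opNorm A * (p:ℝ) :=
        hb.trans (mul_le_mul_of_nonneg_left hf (opNorm_nonneg A))
      have := pow_le_pow_left₀ (norm_nonneg _) hle 2
      calc ‖A (H t - W t)‖^2 ≤ (opNorm A * (p:ℝ))^2 := this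
        _ = c := by rw [hc]; ring
    -- β-shift
    have hshift : Lt = L1 + ((βt - βp)/2) * q := by
      rw [hLtdef, hL1def, hqdef]
      unfold Lag
      ring
    -- (10) β increase control
    have h10 : βt - βp ≤ η * βt := by
      have hxsp : x ≤ sp * st := by
        rw [← hsp2, sq]
        exact mul_le_mul_of_nonneg_left hspst (by linarith)
      have key : st - sp ≤ 2 / st := by
        rw [le_div_iff₀ hst0]
        nlinarith [hst2, hxsp]
      have : β₀ * (st - sp) ≤ β₀ * (2/st) := mul_le_mul_of_nonneg_left key hβ₀.le
      have heq : η * βt = β₀ * (2/st) := by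
        rw [hηdef, hβtdef, ← hst2]
        field_simp
      rw [heq, hβtdef, hβpdef]
      linarith
    -- main chain for the primal step
    have hA1 : Lag C A v βt (W (t+1)) (y t) ≤ (1-η)*L1 + η*fstar + η^2*(βt/2)*c := by
      calc Lag C A v βt (W (t+1)) (y t)
          = Lt + η * Matrix.trace (G * (H t - W t)) + η^2 * (βt/2) * ‖A (H t - W t)‖^2 := h1
        _ ≤ Lt + η * Matrix.trace (G * (Wstar - W t)) + η^2 * (βt/2) * ‖A (H t - W t)‖^2 := by
            have := mul_le_mul_of_nonneg_left h2 hη0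
            linarith
        _ = Lt + η * (fstar - Lt - (βt/2)*q) + η^2 * (βt/2) * ‖A (H t - W t)‖^2 := by
            rw [h6]
        _ ≤ Lt + η * (fstar - Lt - (βt/2)*q) + η^2 * (βt/2) * c := by
            have := mul_le_mul_of_nonneg_left h7 (show (0:ℝ) ≤ η^2*(βt/2) by positivity)
            linarith
        _ = (1-η)*L1 + η*fstar + (((1-η)*(βt-βp) - η*βt)/2)*q + η^2*(βt/2)*c := by
            rw [hshift]; ring
        _ ≤ (1-η)*L1 + η*fstar + η^2*(βt/2)*c := by
            have hcoef : (1-η)*(βt-βp) - η*βt ≤ 0 := by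
              nlinarith [h10, mul_nonneg hη0 hβtβp]
            have := mul_nonpos_of_nonpos_of_nonneg
              (show ((1-η)*(βt-βp) - η*βt)/2 ≤ 0 by linarith) hq0
            linarith
    -- dual step
    set g : EuclideanSpace ℝ (Fin d) := A (W (t+1)) - v with hgdef
    have h8 : Lag C A v βt (W (t+1)) (y (t+1))
        = Lag C A v βt (W (t+1)) (y t) + γ t * ‖g‖^2 := by
      have hsum : (∑ i, (y t + γ t • g) i * g i) = (∑ i, y t i * g i) + γ t * ‖g‖^2 := by
        calc (∑ i, (y t + γ t • g) i * g i)
            = ∑ i, (y t i * g i + γ t * (g i * g i)) := by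
              refine Finset.sum_congr rfl fun i _ => ?_
              have : (y t + γ t • g) i = y t i + γ t * g i := by
                simp [PiLp.add_apply, PiLp.smul_apply]
              rw [this]; ring
          _ = (∑ i, y t i * g i) + γ t * (∑ i, g i * g i) := by
              rw [Finset.sum_add_distrib, Finset.mul_sum]
          _ = (∑ i, y t i * g i) + γ t * ‖g‖^2 := by
              rw [← euclid_inner g g, real_inner_self_eq_norm_sq]
      unfold Lag
      rw [hyupd t ht, ← hgdef, hsum]
      ring
    have h9 : γ t * ‖g‖^2 ≤ βt * η^2 * c := by
      have := hγ t ht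
      rw [hgdef]
      calc γ t * ‖A (W (t+1)) - v‖^2
          ≤ (β₀ * Real.sqrt ((t : ℝ) + 1)) * (2 / ((t : ℝ) + 1)) ^ 2 * (p : ℝ) ^ 2 * opNorm A ^ 2 := this
        _ = βt * η^2 * c := by
            rw [hβtdef, hηdef, hc, ← hstdef, ← hxdef]
            ring
    -- combine
    have htot : Lag C A v βt (W (t+1)) (y (t+1)) - fstar
        ≤ (1-η)*(L1 - fstar) + (3/2)*η^2*βt*c := by
      rw [h8]
      have := add_le_add hA1 h9
      calc Lag C A v βt (W (t+1)) (y t) + γ t * ‖g‖^2 - fstar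
          ≤ ((1-η)*L1 + η*fstar + η^2*(βt/2)*c) + βt*η^2*c - fstar := by linarith
        _ = (1-η)*(L1 - fstar) + (3/2)*η^2*βt*c := by ring
    have hfin : (3/2)*η^2*βt*c = 6*β₀*c/((x+1)*st) := by
      rw [hηdef, hβtdef, ← hst2]
      field_simp
      ring
    rw [hfin] at htot
    exact htot
  -- the induction
  have hgoalrw : ∀ s : ℝ, 6 * β₀ * opNorm A ^ 2 * (p:ℝ)^2 / s = 6*β₀*c/s := by
    intro s; rw [hc]; ring_nf
  intro t ht
  induction t, ht using Nat.le_induction with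
  | base =>
    have h := hstep 1 le_rfl
    push_cast at h ⊢
    rw [hgoalrw]
    have h2' : (0:ℝ) < Real.sqrt 2 := Real.sqrt_pos.mpr (by norm_num)
    have hnum : 6*β₀*c/((1+1) * Real.sqrt (1+1)) ≤ 6*β₀*c/Real.sqrt (1+1) := by
      apply div_le_div_of_nonneg_left (by positivity) (by norm_num [h2']) (by nlinarith [Real.sqrt_nonneg ((1:ℝ)+1)])
    norm_num at h hnum ⊢
    nlinarith [h, hnum]
  | succ n hn ih =>
    have h := hstep (n+1) (by omega)
    push_cast at h ih ⊢
    rw [hgoalrw] at ih ⊢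
    have hcoef : (0:ℝ) ≤ 1 - 2/((n:ℝ)+1+1) := by
      have hn1 : (1:ℝ) ≤ (n:ℝ) := by exact_mod_cast hn
      have : 2/((n:ℝ)+1+1) ≤ 1 := by
        rw [div_le_one (by linarith)]; linarith
      linarith
    have step2 := step_numeric (6*β₀*c) (by positivity) (show (1:ℝ) ≤ (n:ℝ)+1 by
      have : (1:ℝ) ≤ (n:ℝ) := by exact_mod_cast hn
      linarith)
    have hmul := mul_le_mul_of_nonneg_left ih hcoef
    calc Lag C A v (β₀ * Real.sqrt ((n:ℝ)+1+1)) (W (n+1+1)) (y (n+1+1)) - fstar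
        ≤ (1 - 2/((n:ℝ)+1+1)) * (Lag C A v (β₀ * Real.sqrt ((n:ℝ)+1)) (W (n+1)) (y (n+1)) - fstar)
          + 6*β₀*c/(((n:ℝ)+1+1) * Real.sqrt ((n:ℝ)+1+1)) := h
      _ ≤ (1 - 2/((n:ℝ)+1+1)) * (6*β₀*c/Real.sqrt ((n:ℝ)+1))
          + 6*β₀*c/(((n:ℝ)+1+1) * Real.sqrt ((n:ℝ)+1+1)) := by linarith
      _ ≤ 6*β₀*c/Real.sqrt ((n:ℝ)+1+1) := by
          have := step2
          convert this using 3 <;> ring_nf
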